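/- All potential-overlap classes for a translation α appear in a fixed iterate: assume 𝒥(Φ^N(ξ)) = 𝒥(Λ) for some N ≥ 1. Then for every α ∈ ℝ^d with |α| ≤ α_max and all i, j ≤ m, u ∈ Λ_i, v ∈ Λ_j with |u − α − v| < R, there exist y ∈ (Φ^{N+k}(ξ))_i and z ∈ (Φ^{N+k}(ξ))_j such that y − z = u − v. -/

import Mathlib

open Pointwise Set

noncomputable section

def UniformlyDiscrete {X : Type*} [PseudoMetricSpace X] (S : Set X) : Prop :=
  ∃ r > 0, ∀ x ∈ S, ∀ y ∈ S, x ≠ y → r ≤ dist x y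

def RelativelyDense {X : Type*} [PseudoMetricSpace X] (S : Set X) : Prop :=
  ∃ R > 0, ∀ x : X, ∃ y ∈ S, dist x y ≤ R

def IsDelone {X : Type*} [PseudoMetricSpace X] (S : Set X) : Prop :=
  UniformlyDiscrete S ∧ RelativelyDense S

/-- Iterated digit sets: `iterD Q D n i j` is `(Dⁿ)_{ij}`. -/
def iterD {E : Type*} [AddCommGroup E] {m : ℕ}
    (Q : E → E) (D : Fin m → Fin m → Set E) : ℕ → Fin m → Fin m → Set E
  | 0 => fun i j => if i = j then {0} else ∅
  | n + 1 => fun i j => ⋃ l : Fin m, D i l + Q '' iterD Q D n l j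


section Aux
variable {E : Type*} [AddCommGroup E] {m : ℕ} (Q : E → E) (D : Fin m → Fin m → Set E)

lemma iterD_finite (hDfin : ∀ i j, (D i j).Finite) :
    ∀ n i j, (iterD Q D n i j).Finite := by
  intro n
  induction n with
  | zero => intro i j; by_cases h : i = j <;> simp [iterD, h]
  | succ n ih =>
    intro i j
    simp only [iterD]
    exact Set.finite_iUnion fun l => (hDfin i l).add ((ih l j).image Q)

lemma iterD_comp_mem (hadd : ∀ x y, Q (x + y) = Q x + Q y) {a b : ℕ} :
    ∀ {i l j : Fin m} {e₁ e₂ : E}, e₁ ∈ iterD Q D a i l → e₂ ∈ iterD Q D b l j →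
      e₁ + Q^[a] e₂ ∈ iterD Q D (a + b) i j := by
  induction a with
  | zero =>
    intro i l j e₁ e₂ h1 h2
    simp only [iterD] at h1
    by_cases h : i = l
    · subst h
      simp only [if_pos rfl, Set.mem_singleton_iff] at h1
      subst h1
      simpa [Nat.zero_add] using h2
    · simp [if_neg h] at h1
  | succ a ih =>
    intro i l j e₁ e₂ h1 h2
    simp only [iterD, Set.mem_iUnion] at h1
    obtain ⟨l₁, h1⟩ := h1
    rw [Set.mem_add] at h1
    obtain ⟨x, hx, y, hy, hxy⟩ := h1
    obtain ⟨f, hf, rfl⟩ := hy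
    have key : f + Q^[a] e₂ ∈ iterD Q D (a + b) l₁ j := ih hf h2
    have : a + 1 + b = (a + b) + 1 := by omega
    rw [this]
    simp only [iterD, Set.mem_iUnion]
    refine ⟨l₁, ?_⟩
    rw [Set.mem_add]
    refine ⟨x, hx, Q (f + Q^[a] e₂), ⟨_, key, rfl⟩, ?_⟩
    rw [hadd]
    rw [← hxy]
    have : Q^[a + 1] e₂ = Q (Q^[a] e₂) := by
      rw [← Function.iterate_succ_apply' Q a e₂]
    rw [this]
    abel

lemma decompose (hadd : ∀ x y, Q (x + y) = Q x + Q y) (Λ : Fin m → Set E) (hsub : ∀ i, Λ i = ⋃ j, Q '' Λ j + D i j) :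
    ∀ n i, ∀ u ∈ Λ i, ∃ l, ∃ u' ∈ Λ l, ∃ ee ∈ iterD Q D n i l, u = Q^[n] u' + ee := by
  intro n
  induction n with
  | zero =>
    intro i u hu
    exact ⟨i, u, hu, 0, by simp [iterD], by simp⟩
  | succ n ih =>
    intro i u hu
    rw [hsub i] at hu
    simp only [Set.mem_iUnion] at hu
    obtain ⟨j, hu⟩ := hu
    rw [Set.mem_add] at hu
    obtain ⟨x, ⟨w, hw, rfl⟩, y, hy, hxy⟩ := hu
    obtain ⟨l, u', hu', ee, hee, hwe⟩ := ih j w hw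
    refine ⟨l, u', hu', y + Q ee, ?_, ?_⟩
    · simp only [iterD, Set.mem_iUnion]
      exact ⟨j, Set.add_mem_add hy ⟨ee, hee, rfl⟩⟩
    · rw [← hxy, hwe, hadd]
      rw [← Function.iterate_succ_apply' Q n u']
      abel

end Aux

/-- all potential-overlap classes for a translation `α` with `|α| ≤ α_max`
appear already among differences of points of `Φ^{N+k}(ξ)`, provided `𝒥(Φ^N(ξ)) = 𝒥(Λ)`. -/
theorem stmt_9 (d m : ℕ) (hd : 1 ≤ d) (hm : 1 ≤ m)
    (Q : EuclideanSpace ℝ (Fin d) ≃L[ℝ] EuclideanSpace ℝ (Fin d))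
    (D : Fin m → Fin m → Set (EuclideanSpace ℝ (Fin d)))
    (hDfin : ∀ i j, (D i j).Finite)
    (k : ℕ) (hk : 1 ≤ k)
    (hQk : ‖(Q.symm : EuclideanSpace ℝ (Fin d) →L[ℝ] EuclideanSpace ℝ (Fin d)) ^ k‖ < 1)
    (e : ℝ)
    (he : e = sSup {t : ℝ | ∃ i j i' j' : Fin m,
      ∃ x ∈ iterD (⇑Q) D k i j, ∃ y ∈ iterD (⇑Q) D k i' j', t = ‖x - y‖})
    (R : ℝ)
    (hR : R = e * ‖(Q.symm : EuclideanSpace ℝ (Fin d) →L[ℝ] EuclideanSpace ℝ (Fin d)) ^ k‖ /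
      (1 - ‖(Q.symm : EuclideanSpace ℝ (Fin d) →L[ℝ] EuclideanSpace ℝ (Fin d)) ^ k‖))
    (Λ : Fin m → Set (EuclideanSpace ℝ (Fin d)))
    (hDel : ∀ i, IsDelone (Λ i)) (hDelU : IsDelone (⋃ i, Λ i))
    (hsub : ∀ i, Λ i = ⋃ j, ⇑Q '' Λ j + D i j)
    (hdisj : ∀ i : Fin m, ∀ j j' : Fin m, ∀ x ∈ D i j, ∀ x' ∈ D i j',
      (j, x) ≠ (j', x') → Disjoint (x +ᵥ ⇑Q '' Λ j) (x' +ᵥ ⇑Q '' Λ j'))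
    (j₀ : Fin m) (ξ : EuclideanSpace ℝ (Fin d)) (hξ : ξ ∈ Λ j₀)
    (d₀ : EuclideanSpace ℝ (Fin d)) (hd₀ : d₀ ∈ D j₀ j₀) (hfix : ξ = Q ξ + d₀)
    (Phi : ℕ → Fin m → Set (EuclideanSpace ℝ (Fin d)))
    (hPhi : ∀ n i, Phi n i = (⇑Q)^[n] ξ +ᵥ iterD (⇑Q) D n i j₀)
    (hgen : ∀ i, Λ i = ⋃ n : ℕ, Phi n i)
    (αmax : ℝ) (hα : 0 < αmax)
    (J : (Fin m → Set (EuclideanSpace ℝ (Fin d))) →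
      Set (Fin m × EuclideanSpace ℝ (Fin d) × Fin m))
    (hJ : ∀ G, J G = { t | ∃ i j, ∃ y ∈ G i, ∃ z ∈ G j,
      t = (i, y - z, j) ∧ ‖y - z‖ <
        R + ‖(Q.symm : EuclideanSpace ℝ (Fin d) →L[ℝ] EuclideanSpace ℝ (Fin d)) ^ k‖ * αmax })
    (N : ℕ) (hN : 1 ≤ N)
    (hJeq : J (Phi N) = J Λ) :
    ∀ α : EuclideanSpace ℝ (Fin d), ‖α‖ ≤ αmax →
      ∀ (i j : Fin m), ∀ u ∈ Λ i, ∀ v ∈ Λ j, ‖u - α - v‖ < R →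
        ∃ y ∈ Phi (N + k) i, ∃ z ∈ Phi (N + k) j, y - z = u - v := by

  intro α hαle i j u hu v hv huv
  set Qk : EuclideanSpace ℝ (Fin d) →L[ℝ] EuclideanSpace ℝ (Fin d) :=
    (Q.symm : EuclideanSpace ℝ (Fin d) →L[ℝ] EuclideanSpace ℝ (Fin d)) ^ k with hQkdef
  set q : ℝ := ‖Qk‖ with hqdef
  have hadd : ∀ x y, Q (x + y) = Q x + Q y := fun x y => map_add Q x y
  -- inverse relation
  have hinv : ∀ x, Qk ((⇑Q)^[k] x) = x := by
    intro x
    rw [hQkdef, FunLike.coe_pow_eq_iterate]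
    have : Function.LeftInverse (⇑Q.symm) (⇑Q) := Q.symm_apply_apply
    simpa using this.iterate k x
  -- q > 0
  have hq0 : 0 < q := by
    set x := EuclideanSpace.single (⟨0, hd⟩ : Fin d) (1:ℝ) with hxdef
    have hx : x ≠ 0 := by
      intro h
      have := congrArg (fun f => f (⟨0, hd⟩ : Fin d)) h
      simp [hxdef] at this
    have hx0 : 0 < ‖x‖ := norm_pos_iff.mpr hx
    have hle : ‖x‖ ≤ q * ‖(⇑Q)^[k] x‖ := by
      conv_lhs => rw [← hinv x]
      exact Qk.le_opNorm _
    nlinarith [norm_nonneg ((⇑Q)^[k] x)]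
  have h1q : 0 < 1 - q := by rw [hqdef]; linarith
  have hlin : ∀ x y, (⇑Q)^[k] (x - y) = (⇑Q)^[k] x - (⇑Q)^[k] y := by
    intro x y
    have : (⇑Q)^[k] = ⇑(((Q : EuclideanSpace ℝ (Fin d) →L[ℝ] EuclideanSpace ℝ (Fin d))) ^ k) := by
      rw [FunLike.coe_pow_eq_iterate]; simp
    rw [this]; exact map_sub _ x y
  -- decompose u and v
  obtain ⟨i', u', hu', du, hdu, hudec⟩ := decompose (⇑Q) D hadd Λ hsub k i u hu
  obtain ⟨j', v', hv', dv, hdv, hvdec⟩ := decompose (⇑Q) D hadd Λ hsub k j v hv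
  -- bound on ‖du - dv‖
  have hBdd : BddAbove {t : ℝ | ∃ i j i' j' : Fin m,
      ∃ x ∈ iterD (⇑Q) D k i j, ∃ y ∈ iterD (⇑Q) D k i' j', t = ‖x - y‖} := by
    have hT : (⋃ i : Fin m, ⋃ j : Fin m, iterD (⇑Q) D k i j).Finite :=
      Set.finite_iUnion fun i => Set.finite_iUnion fun j => iterD_finite (⇑Q) D hDfin k i j
    have hsubT : {t : ℝ | ∃ i j i' j' : Fin m,
        ∃ x ∈ iterD (⇑Q) D k i j, ∃ y ∈ iterD (⇑Q) D k i' j', t = ‖x - y‖} ⊆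
        (fun p : EuclideanSpace ℝ (Fin d) × EuclideanSpace ℝ (Fin d) => ‖p.1 - p.2‖) ''
        ((⋃ i : Fin m, ⋃ j : Fin m, iterD (⇑Q) D k i j) ×ˢ
         (⋃ i : Fin m, ⋃ j : Fin m, iterD (⇑Q) D k i j)) := by
      rintro t ⟨i₁, j₁, i₂, j₂, x, hx, y, hy, rfl⟩
      exact ⟨(x, y), ⟨Set.mem_iUnion.mpr ⟨i₁, Set.mem_iUnion.mpr ⟨j₁, hx⟩⟩,
        Set.mem_iUnion.mpr ⟨i₂, Set.mem_iUnion.mpr ⟨j₂, hy⟩⟩⟩, rfl⟩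
    exact ((hT.prod hT).image _).subset hsubT |>.bddAbove
  have hde : ‖du - dv‖ ≤ e := by
    rw [he]
    exact le_csSup hBdd ⟨i, i', j, j', du, hdu, dv, hdv, rfl⟩
  -- key estimate
  have hkey : u' - v' = Qk (u - v - (du - dv)) := by
    have : u - v - (du - dv) = (⇑Q)^[k] (u' - v') := by
      rw [hlin, hudec, hvdec]; abel
    rw [this, hinv]
  have hest : ‖u' - v'‖ < R + q * αmax := by
    have h1 : ‖u' - v'‖ ≤ q * ‖u - v - (du - dv)‖ := by
      rw [hkey]; exact Qk.le_opNorm _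
    have h2 : ‖u - v - (du - dv)‖ < R + αmax + e := by
      have : u - v - (du - dv) = (u - α - v) + α - (du - dv) := by abel
      rw [this]
      calc ‖(u - α - v) + α - (du - dv)‖ ≤ ‖u - α - v‖ + ‖α‖ + ‖du - dv‖ := by
            exact (norm_sub_le _ _).trans (by gcongr; exact norm_add_le _ _)
        _ < R + αmax + e := by linarith
    have hReq : R * (1 - q) = e * q := by
      rw [hR]
      field_simp
    nlinarith
  -- use the hypothesis J (Phi N) = J Λ
  have hmem : (i', u' - v', j') ∈ J Λ := by
    rw [hJ]
    exact ⟨i', j', u', hu', v', hv', rfl, by exact hest⟩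
  rw [← hJeq, hJ] at hmem
  obtain ⟨i₁, j₁, y', hy', z', hz', heq, -⟩ := hmem
  obtain ⟨hi1, hyz, hj1⟩ : i₁ = i' ∧ y' - z' = u' - v' ∧ j₁ = j' := by
    have h1 := congrArg Prod.fst heq
    have h2 := congrArg (fun p => p.2.1) heq
    have h3 := congrArg (fun p => p.2.2) heq
    exact ⟨h1.symm, h2.symm, h3.symm⟩
  subst hi1 hj1
  -- recombine
  refine ⟨(⇑Q)^[k] y' + du, ?_, (⇑Q)^[k] z' + dv, ?_, ?_⟩
  · rw [hPhi] at hy' ⊢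
    obtain ⟨ey, hey, hye⟩ := hy'
    rw [Nat.add_comm N k]
    refine ⟨du + (⇑Q)^[k] ey, iterD_comp_mem (⇑Q) D hadd hdu hey, ?_⟩
    simp only [vadd_eq_add] at hye ⊢
    rw [← hye]
    have haddit : ∀ x y, (⇑Q)^[k] (x + y) = (⇑Q)^[k] x + (⇑Q)^[k] y := by
      intro x y
      have h2 : (⇑Q)^[k] =
          ⇑(((Q : EuclideanSpace ℝ (Fin d) →L[ℝ] EuclideanSpace ℝ (Fin d))) ^ k) := by
        rw [FunLike.coe_pow_eq_iterate]; simp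
      rw [h2]; exact map_add _ x y
    rw [haddit, ← Function.iterate_add_apply]
    abel
  · rw [hPhi] at hz' ⊢
    obtain ⟨ez, hez, hze⟩ := hz'
    rw [Nat.add_comm N k]
    refine ⟨dv + (⇑Q)^[k] ez, iterD_comp_mem (⇑Q) D hadd hdv hez, ?_⟩
    simp only [vadd_eq_add] at hze ⊢
    rw [← hze]
    have haddit : ∀ x y, (⇑Q)^[k] (x + y) = (⇑Q)^[k] x + (⇑Q)^[k] y := by
      intro x y
      have h2 : (⇑Q)^[k] =
          ⇑(((Q : EuclideanSpace ℝ (Fin d) →L[ℝ] EuclideanSpace ℝ (Fin d))) ^ k) := by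
        rw [FunLike.coe_pow_eq_iterate]; simp
      rw [h2]; exact map_add _ x y
    rw [haddit, ← Function.iterate_add_apply]
    abel
  · have : (⇑Q)^[k] y' + du - ((⇑Q)^[k] z' + dv) = (⇑Q)^[k] (y' - z') + (du - dv) := by
      rw [hlin]; abel
    rw [this, hyz, hlin, hudec, hvdec]
    abel
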